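/- Let F be a finite field and C_k(α,v,η) a TGRS code of length n and dimension k with 2 ≤ k ≤ n−k. Then C_k(α,v,η) is an NMDS code (i.e., both C_k(α,v,η) and its dual code have minimum Hamming distance exactly one less than the Singleton bound: C_k(α,v,η) has minimum distance n−k and its dual has minimum distance k) if and only if −η^{−1} ∈ S_k, where S_k := { Σ_{i∈I} α_i : I ⊆ {1,…,n}, |I| = k }. -/
import Mathlib


open Finset Polynomial

noncomputable section

/-- The twisted generalized Reed–Solomon (TGRS) code of length `n` and dimension `k`,
with evaluation points `α`, multipliers `v`, hook `k-1`, twist `1` and twist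
coefficient `η`:  the set of words `(v i * f (α i))_i` where
`f(x) = Σ_{j<k} a_j x^j + η a_{k-1} x^k`. -/
def TGRSCode (F : Type*) [Field F] (n k : ℕ) (α v : Fin n → F) (η : F) :
    Set (Fin n → F) :=
  {c | ∃ a : ℕ → F, c = fun i =>
    v i * ((∑ j ∈ Finset.range k, a j * α i ^ j) + η * a (k - 1) * α i ^ k)}

/-- The dual of a code `C ⊆ F^n` under the standard inner product. -/
def dualCode {F : Type*} [Field F] {n : ℕ} (C : Set (Fin n → F)) :
    Set (Fin n → F) :=
  {x | ∀ c ∈ C, ∑ i, x i * c i = 0}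

/-- A code is self-dual if it coincides with its dual. -/
def IsSelfDual {F : Type*} [Field F] {n : ℕ} (C : Set (Fin n → F)) : Prop :=
  C = dualCode C

/-- The Hamming weight of a word. -/
def hwt {F : Type*} [Field F] {n : ℕ} (c : Fin n → F) : ℕ :=
  {i | c i ≠ 0}.ncard

/-- `C` has minimum (Hamming) distance exactly `d`. -/
def IsMinDist {F : Type*} [Field F] {n : ℕ} (C : Set (Fin n → F)) (d : ℕ) : Prop :=
  (∃ c ∈ C, c ≠ 0 ∧ hwt c = d) ∧ ∀ c ∈ C, c ≠ 0 → d ≤ hwt c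

namespace TGRSAux

variable {F : Type*} [Field F]

/-! ### The twisted polynomial -/

def tpoly (k : ℕ) (η : F) (a : ℕ → F) : F[X] :=
  (∑ j ∈ Finset.range k, C (a j) * X ^ j) + C (η * a (k - 1)) * X ^ k

lemma tpoly_eval (k : ℕ) (η : F) (a : ℕ → F) (x : F) :
    (tpoly k η a).eval x = (∑ j ∈ Finset.range k, a j * x ^ j) + η * a (k - 1) * x ^ k := by
  simp [tpoly, eval_finset_sum]

lemma tpoly_natDegree_le (k : ℕ) (η : F) (a : ℕ → F) : (tpoly k η a).natDegree ≤ k := by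
  unfold tpoly
  refine le_trans (natDegree_add_le _ _) (max_le ?_ ?_)
  · refine le_trans (natDegree_sum_le _ _) ?_
    rw [Finset.fold_max_le]
    refine ⟨Nat.zero_le _, fun j hj => le_trans (natDegree_C_mul_X_pow_le _ _) ?_⟩
    exact le_of_lt (Finset.mem_range.mp hj)
  · exact natDegree_C_mul_X_pow_le _ _

lemma tpoly_coeff_of_lt {k j : ℕ} (η : F) (a : ℕ → F) (hj : j < k) :
    (tpoly k η a).coeff j = a j := by
  unfold tpoly
  rw [coeff_add, finset_sum_coeff]
  simp only [coeff_C_mul, coeff_X_pow, if_neg (Nat.ne_of_lt hj), mul_zero, add_zero, mul_ite,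
    mul_one]
  rw [Finset.sum_ite_eq, if_pos (Finset.mem_range.mpr hj)]

lemma tpoly_coeff_k (k : ℕ) (η : F) (a : ℕ → F) :
    (tpoly k η a).coeff k = η * a (k - 1) := by
  unfold tpoly
  rw [coeff_add, finset_sum_coeff]
  have h0 : ∀ l ∈ Finset.range k, (C (a l) * X ^ l).coeff k = 0 := by
    intro l hl
    rw [coeff_C_mul, coeff_X_pow, if_neg (Nat.ne_of_lt (Finset.mem_range.mp hl)).symm, mul_zero]
  rw [Finset.sum_eq_zero h0, zero_add, coeff_C_mul, coeff_X_pow, if_pos rfl, mul_one]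

lemma tpoly_eq_of (k : ℕ) (η : F) (p : F[X]) (hdeg : p.natDegree ≤ k)
    (hc : p.coeff k = η * p.coeff (k - 1)) :
    tpoly k η (fun j => p.coeff j) = p := by
  ext m
  rcases lt_trichotomy m k with h | rfl | h
  · rw [tpoly_coeff_of_lt _ _ h]
  · rw [tpoly_coeff_k, hc]
  · rw [coeff_eq_zero_of_natDegree_lt (lt_of_le_of_lt (tpoly_natDegree_le _ _ _) h),
      coeff_eq_zero_of_natDegree_lt (lt_of_le_of_lt hdeg h)]

lemma mem_code_iff {n k : ℕ} {α v : Fin n → F} {η : F} {c : Fin n → F} :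
    c ∈ TGRSCode F n k α v η ↔ ∃ a : ℕ → F, c = fun i => v i * (tpoly k η a).eval (α i) := by
  simp only [TGRSCode, Set.mem_setOf_eq, tpoly_eval]

/-! ### Hamming weight bookkeeping -/

lemma hwt_eq_card {n : ℕ} (c : Fin n → F) [DecidablePred fun i => c i ≠ 0] :
    hwt c = #(Finset.univ.filter fun i => c i ≠ 0) := by
  rw [hwt, ← Set.ncard_coe_finset]
  congr 1
  ext i
  simp

/-! ### Lagrange interpolation coefficient identities -/

variable {ι : Type*} [DecidableEq ι]

lemma coeff_basis_top {s : Finset ι} {α : ι → F} {i : ι} (hi : i ∈ s) :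
    (Lagrange.basis s α i).coeff (#s - 1) = Lagrange.nodalWeight s α i := by
  rw [Lagrange.basis_eq_prod_sub_inv_mul_nodal_div hi, ← Lagrange.nodal_erase_eq_nodal_div hi,
    coeff_C_mul]
  have h1 : (Lagrange.nodal (s.erase i) α).natDegree = #s - 1 := by
    rw [Lagrange.natDegree_nodal, card_erase_of_mem hi]
  rw [← h1, (Lagrange.nodal_monic).coeff_natDegree, mul_one]

lemma sum_nodalWeight_mul_eval {s : Finset ι} {α : ι → F}
    (hinj : Set.InjOn α s) (p : F[X]) (hdeg : p.degree < #s) :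
    ∑ i ∈ s, Lagrange.nodalWeight s α i * p.eval (α i) = p.coeff (#s - 1) := by
  conv_rhs => rw [Lagrange.eq_interpolate hinj hdeg]
  rw [Lagrange.interpolate_apply, finset_sum_coeff]
  exact (Finset.sum_congr rfl fun i hi => by
    rw [coeff_C_mul, coeff_basis_top hi, mul_comm]).symm

lemma sum_w_pow_lt {s : Finset ι} {α : ι → F} (hinj : Set.InjOn α s) {j : ℕ} (hj : j < #s) :
    ∑ i ∈ s, Lagrange.nodalWeight s α i * α i ^ j
      = if #s - 1 = j then 1 else 0 := by
  have := sum_nodalWeight_mul_eval hinj (X ^ j)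
    (by rw [degree_X_pow]; exact_mod_cast hj)
  simpa [coeff_X_pow] using this

lemma sum_w_pow_card {s : Finset ι} {α : ι → F} (hinj : Set.InjOn α s) (hs : s.Nonempty) :
    ∑ i ∈ s, Lagrange.nodalWeight s α i * α i ^ (#s) = ∑ i ∈ s, α i := by
  have hdeg : (X ^ (#s) - Lagrange.nodal s α).degree < ((#s : ℕ) : WithBot ℕ) := by
    have h := degree_sub_lt (p := (X : F[X]) ^ (#s)) (q := Lagrange.nodal s α)
      (by rw [degree_X_pow, Lagrange.degree_nodal]) (pow_ne_zero _ X_ne_zero)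
      (by rw [(monic_X_pow _).leadingCoeff, Lagrange.nodal_monic.leadingCoeff])
    rwa [degree_X_pow] at h
  have key := sum_nodalWeight_mul_eval hinj (X ^ (#s) - Lagrange.nodal s α) hdeg
  have h1 : ∀ i ∈ s, Lagrange.nodalWeight s α i * (X ^ (#s) - Lagrange.nodal s α).eval (α i)
      = Lagrange.nodalWeight s α i * α i ^ (#s) := by
    intro i hi
    rw [eval_sub, eval_pow, eval_X, Lagrange.eval_nodal_at_node hi, sub_zero]
  rw [Finset.sum_congr rfl h1] at key
  rw [key, coeff_sub, coeff_X_pow, if_neg (by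
      have := Finset.card_pos.mpr hs
      omega),
    Lagrange.nodal_eq, prod_X_sub_C_coeff_card_pred s α (Finset.card_pos.mpr hs), zero_sub,
    neg_neg]

/-! ### Lower bound for the code -/

lemma code_lower {n k : ℕ} (hk : 1 ≤ k) (α v : Fin n → F) (hα : Function.Injective α)
    (hv : ∀ i, v i ≠ 0) (η : F) (c : Fin n → F)
    (hc : c ∈ TGRSCode F n k α v η) (hc0 : c ≠ 0) :
    n - k ≤ hwt c := by
  classical
  obtain ⟨a, rfl⟩ := mem_code_iff.mp hc
  set p := tpoly k η a with hp
  set Z : Finset (Fin n) := Finset.univ.filter (fun i => p.eval (α i) = 0) with hZdef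
  have hZ : #Z ≤ k := by
    by_contra h
    push_neg at h
    have hpz : p = 0 := by
      refine eq_zero_of_natDegree_lt_card_of_eval_eq_zero p
        (f := fun i : {i // i ∈ Z} => α i) (hα.comp Subtype.val_injective) ?_ ?_
      · rintro ⟨i, hi⟩
        exact (Finset.mem_filter.mp hi).2
      · rw [Fintype.card_coe]
        exact lt_of_le_of_lt (tpoly_natDegree_le _ _ _) h
    apply hc0
    funext i
    simp [hpz]
  have hcard : #Z + #(Finset.univ.filter fun i => ¬ p.eval (α i) = 0) = n := by
    rw [hZdef, Finset.card_filter_add_card_filter_not, Finset.card_univ, Fintype.card_fin]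
  have hsupp : (Finset.univ.filter fun i => (fun i => v i * p.eval (α i)) i ≠ 0)
      = Finset.univ.filter fun i => ¬ p.eval (α i) = 0 := by
    refine Finset.filter_congr fun i _ => ?_
    simp [mul_ne_zero_iff, hv i]
  rw [hwt_eq_card, hsupp]
  omega

/-! ### Condition from a minimum-weight codeword -/

lemma cond_of_codeword {n k : ℕ} (hk : 2 ≤ k) (hn : 2 * k ≤ n) (α v : Fin n → F)
    (hα : Function.Injective α) (hv : ∀ i, v i ≠ 0) (η : F) (hη : η ≠ 0)
    (c : Fin n → F) (hc : c ∈ TGRSCode F n k α v η) (hc0 : c ≠ 0) (hw : hwt c = n - k) :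
    ∃ I : Finset (Fin n), #I = k ∧ ∑ i ∈ I, α i = -η⁻¹ := by
  classical
  obtain ⟨a, rfl⟩ := mem_code_iff.mp hc
  set p := tpoly k η a with hp
  set Z : Finset (Fin n) := Finset.univ.filter (fun i => p.eval (α i) = 0) with hZdef
  have hpz : p ≠ 0 := by
    intro h
    apply hc0
    funext i
    simp [h]
  have hcard : #Z + #(Finset.univ.filter fun i => ¬ p.eval (α i) = 0) = n := by
    rw [hZdef, Finset.card_filter_add_card_filter_not, Finset.card_univ, Fintype.card_fin]
  have hsupp : (Finset.univ.filter fun i => (fun i => v i * p.eval (α i)) i ≠ 0)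
      = Finset.univ.filter fun i => ¬ p.eval (α i) = 0 := by
    refine Finset.filter_congr fun i _ => ?_
    simp [mul_ne_zero_iff, hv i]
  rw [hwt_eq_card, hsupp] at hw
  -- the zero set has exactly k elements
  have hZk : #Z = k := by omega
  have hevalZ : ∀ i : {i // i ∈ Z}, p.eval (α i) = 0 := by
    rintro ⟨i, hi⟩
    exact (Finset.mem_filter.mp hi).2
  -- p = C (η * a (k-1)) * ∏_{i ∈ Z} (X - C (α i))
  set q : F[X] := ∏ i ∈ Z, (X - C (α i)) with hq
  have hqmonic : q.Monic := monic_prod_of_monic _ _ fun i _ => monic_X_sub_C _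
  have hqdeg : q.natDegree = k := by
    rw [hq, natDegree_prod_of_monic _ _ fun i _ => monic_X_sub_C _]
    simp [hZk]
  have hrzero : p - C (η * a (k - 1)) * q = 0 := by
    set r := p - C (η * a (k - 1)) * q with hr
    rcases eq_or_ne r 0 with h | h
    · exact h
    refine eq_zero_of_natDegree_lt_card_of_eval_eq_zero r
      (f := fun i : {i // i ∈ Z} => α i) (hα.comp Subtype.val_injective) ?_ ?_
    · rintro ⟨i, hi⟩
      have : q.eval (α i) = 0 := by
        rw [hq, eval_prod]
        exact Finset.prod_eq_zero hi (by simp)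
      simp [hr, hevalZ ⟨i, hi⟩, this]
    · rw [Fintype.card_coe, hZk]
      -- natDegree r < k since all coefficients ≥ k vanish
      have hcof : ∀ m, k ≤ m → r.coeff m = 0 := by
        intro m hm
        rcases eq_or_lt_of_le hm with rfl | hm'
        · rw [hr, coeff_sub, coeff_C_mul, tpoly_coeff_k,
            ← hqdeg, hqmonic.coeff_natDegree, mul_one, sub_self]
        · rw [hr, coeff_sub, coeff_C_mul,
            coeff_eq_zero_of_natDegree_lt (lt_of_le_of_lt (tpoly_natDegree_le _ _ _) hm'),
            coeff_eq_zero_of_natDegree_lt (by rw [hqdeg]; exact hm'), mul_zero, sub_zero]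
      by_contra hcon
      push_neg at hcon
      exact h (leadingCoeff_eq_zero.mp (hcof _ hcon))
  have hpeq : p = C (η * a (k - 1)) * q := by
    have := sub_eq_zero.mp hrzero
    exact this
  -- a (k-1) ≠ 0
  have hak : a (k - 1) ≠ 0 := by
    intro h
    apply hpz
    rw [hpeq, h, mul_zero, C_0, zero_mul]
  -- compare coefficients in degree k-1
  have hck : p.coeff (k - 1) = a (k - 1) := tpoly_coeff_of_lt _ _ (by omega)
  have hqc : q.coeff (k - 1) = -∑ i ∈ Z, α i := by
    rw [hq, ← hZk, prod_X_sub_C_coeff_card_pred Z α (by omega)]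
  have key : (C (η * a (k - 1)) * q).coeff (k - 1) = a (k - 1) := by rw [← hpeq]; exact hck
  rw [coeff_C_mul, hqc] at key
  have h3 : η * ∑ i ∈ Z, α i = -1 := by
    apply mul_left_cancel₀ hak
    linear_combination -key
  refine ⟨Z, hZk, ?_⟩
  apply mul_left_cancel₀ hη
  rw [h3, mul_neg, mul_inv_cancel₀ hη]

/-! ### A minimum-weight codeword from the condition -/

lemma codeword_of_cond {n k : ℕ} (hk : 2 ≤ k) (hn : 2 * k ≤ n) (α v : Fin n → F)
    (hα : Function.Injective α) (hv : ∀ i, v i ≠ 0) (η : F) (hη : η ≠ 0)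
    (I : Finset (Fin n)) (hI : #I = k) (hs : ∑ i ∈ I, α i = -η⁻¹) :
    ∃ c ∈ TGRSCode F n k α v η, c ≠ 0 ∧ hwt c = n - k := by
  classical
  set q : F[X] := ∏ i ∈ I, (X - C (α i)) with hq
  have hqmonic : q.Monic := monic_prod_of_monic _ _ fun i _ => monic_X_sub_C _
  have hqdeg : q.natDegree = k := by
    rw [hq, natDegree_prod_of_monic _ _ fun i _ => monic_X_sub_C _]
    simp [hI]
  set p : F[X] := C η * q with hp
  have hpdeg : p.natDegree ≤ k := by
    rw [hp]
    exact le_trans (natDegree_mul_le) (by simp [natDegree_C, hqdeg])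
  have hcoeffk : p.coeff k = η := by
    rw [hp, coeff_C_mul, ← hqdeg, hqmonic.coeff_natDegree, mul_one]
  have hqc : q.coeff (k - 1) = η⁻¹ := by
    have h := prod_X_sub_C_coeff_card_pred I α (by rw [hI]; omega)
    rw [hI, hs, neg_neg] at h
    exact h
  have hcoeffk1 : p.coeff (k - 1) = 1 := by
    rw [hp, coeff_C_mul, hqc, mul_inv_cancel₀ hη]
  have hpc : p.coeff k = η * p.coeff (k - 1) := by rw [hcoeffk, hcoeffk1, mul_one]
  set c : Fin n → F := fun i => v i * p.eval (α i) with hc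
  have hmem : c ∈ TGRSCode F n k α v η := by
    rw [mem_code_iff]
    exact ⟨fun j => p.coeff j, by rw [tpoly_eq_of k η p hpdeg hpc]⟩
  have hzero : ∀ i, p.eval (α i) = 0 ↔ i ∈ I := by
    intro i
    constructor
    · intro h
      rw [hp, eval_mul, eval_C, eval_prod] at h
      rcases mul_eq_zero.mp h with h | h
      · exact absurd h hη
      · obtain ⟨j, hj, hj0⟩ := Finset.prod_eq_zero_iff.mp h
        rw [eval_sub, eval_X, eval_C, sub_eq_zero] at hj0
        rwa [hα hj0]
    · intro h
      rw [hp, eval_mul, eval_prod, Finset.prod_eq_zero h (by simp), mul_zero]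
  have hsupp : (Finset.univ.filter fun i => c i ≠ 0) = Iᶜ := by
    ext i
    simp only [Finset.mem_filter, Finset.mem_univ, true_and, Finset.mem_compl, hc]
    rw [mul_ne_zero_iff]
    constructor
    · rintro ⟨-, h⟩ hi
      exact h ((hzero i).mpr hi)
    · intro hi
      exact ⟨hv i, fun h => hi ((hzero i).mp h)⟩
  have hwtc : hwt c = n - k := by
    rw [hwt_eq_card, hsupp, Finset.card_compl, Fintype.card_fin, hI]
  refine ⟨c, hmem, ?_, hwtc⟩
  have hne : (Iᶜ : Finset (Fin n)).Nonempty := by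
    rw [← Finset.card_pos, Finset.card_compl, Fintype.card_fin, hI]
    omega
  obtain ⟨i, hi⟩ := hne
  have hci : c i ≠ 0 := by
    have hi' : i ∈ Finset.univ.filter fun i => c i ≠ 0 := by rw [hsupp]; exact hi
    exact (Finset.mem_filter.mp hi').2
  intro h0
  exact hci (by simpa using congrFun h0 i)

/-! ### Lower bound for the dual code -/

lemma dual_lower {n k : ℕ} (hk : 2 ≤ k) (α v : Fin n → F) (hα : Function.Injective α)
    (hv : ∀ i, v i ≠ 0) (η : F)
    (x : Fin n → F) (hx : x ∈ dualCode (TGRSCode F n k α v η)) (hx0 : x ≠ 0) :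
    k ≤ hwt x := by
  classical
  by_contra hcon
  push_neg at hcon
  set J : Finset (Fin n) := Finset.univ.filter (fun i => x i ≠ 0) with hJ
  have hJcard : #J ≤ k - 1 := by
    rw [hwt_eq_card] at hcon
    rw [hJ]
    omega
  obtain ⟨j0, hj0⟩ : ∃ j0, j0 ∈ J := by
    by_contra h
    push_neg at h
    apply hx0
    funext i
    simp only [Pi.zero_apply]
    by_contra hxi
    exact h i (by simp [hJ, hxi])
  have hj0x : x j0 ≠ 0 := (Finset.mem_filter.mp hj0).2
  set f : F[X] := ∏ j ∈ J.erase j0, (X - C (α j)) with hf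
  have hfdeg : f.natDegree ≤ k - 2 := by
    rw [hf, natDegree_prod_of_monic _ _ fun i _ => monic_X_sub_C _]
    simp only [natDegree_X_sub_C, Finset.sum_const, smul_eq_mul, mul_one]
    have := Finset.card_erase_of_mem hj0
    omega
  have hfk : f.coeff k = η * f.coeff (k - 1) := by
    rw [coeff_eq_zero_of_natDegree_lt (by omega : f.natDegree < k),
      coeff_eq_zero_of_natDegree_lt (by omega : f.natDegree < k - 1), mul_zero]
  set c : Fin n → F := fun i => v i * f.eval (α i) with hc
  have hmem : c ∈ TGRSCode F n k α v η := by
    rw [mem_code_iff]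
    exact ⟨fun j => f.coeff j, by rw [tpoly_eq_of k η f (by omega) hfk]⟩
  have hdual := hx c hmem
  have hsum : ∑ i, x i * c i = ∑ i ∈ J, x i * c i := by
    refine (Finset.sum_subset (Finset.subset_univ J) ?_).symm
    intro i _ hiJ
    have hxi : x i = 0 := by
      by_contra h
      exact hiJ (by simp [hJ, h])
    rw [hxi, zero_mul]
  rw [hsum, ← Finset.add_sum_erase _ _ hj0] at hdual
  have hrest : ∑ i ∈ J.erase j0, x i * c i = 0 := by
    refine Finset.sum_eq_zero fun i hi => ?_
    have hev : f.eval (α i) = 0 := by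
      rw [hf, eval_prod]
      exact Finset.prod_eq_zero hi (by simp)
    rw [hc]
    simp [hev]
  rw [hrest, add_zero] at hdual
  have hfj0 : f.eval (α j0) ≠ 0 := by
    rw [hf, eval_prod]
    refine Finset.prod_ne_zero_iff.mpr fun j hj => ?_
    rw [eval_sub, eval_X, eval_C, sub_ne_zero]
    exact fun h => (Finset.mem_erase.mp hj).1 (hα h).symm
  rcases mul_eq_zero.mp hdual with h | h
  · exact hj0x h
  · rcases mul_eq_zero.mp h with h | h
    · exact hv j0 h
    · exact hfj0 h

/-! ### A weight-`k` dual codeword from the condition -/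

lemma dualword_of_cond {n k : ℕ} (hk : 2 ≤ k) (hn : 2 * k ≤ n) (α v : Fin n → F)
    (hα : Function.Injective α) (hv : ∀ i, v i ≠ 0) (η : F) (hη : η ≠ 0)
    (I : Finset (Fin n)) (hI : #I = k) (hs : ∑ i ∈ I, α i = -η⁻¹) :
    ∃ x ∈ dualCode (TGRSCode F n k α v η), x ≠ 0 ∧ hwt x = k := by
  classical
  have hinj : Set.InjOn α I := Function.Injective.injOn hα
  have hIne : I.Nonempty := Finset.card_pos.mp (by omega)
  set w : Fin n → F := fun i => if i ∈ I then Lagrange.nodalWeight I α i / v i else 0 with hw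
  have S1 : ∀ j ∈ Finset.range k,
      ∑ i ∈ I, Lagrange.nodalWeight I α i * α i ^ j = if k - 1 = j then 1 else 0 := by
    intro j hj
    have h := sum_w_pow_lt (s := I) (α := α) hinj (j := j)
      (by rw [hI]; exact Finset.mem_range.mp hj)
    rwa [hI] at h
  have S2 : ∑ i ∈ I, Lagrange.nodalWeight I α i * α i ^ k = -η⁻¹ := by
    have h := sum_w_pow_card hinj hIne
    rw [hI] at h
    rw [h, hs]
  have hdual : w ∈ dualCode (TGRSCode F n k α v η) := by
    intro c hc
    obtain ⟨a, rfl⟩ := mem_code_iff.mp hc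
    have main : ∑ i ∈ I, Lagrange.nodalWeight I α i * (tpoly k η a).eval (α i) = 0 := by
      simp only [tpoly_eval, mul_add]
      rw [Finset.sum_add_distrib]
      have p1 : ∑ i ∈ I, Lagrange.nodalWeight I α i * ∑ j ∈ Finset.range k, a j * α i ^ j
          = ∑ j ∈ Finset.range k, a j * ∑ i ∈ I, Lagrange.nodalWeight I α i * α i ^ j := by
        simp_rw [Finset.mul_sum]
        rw [Finset.sum_comm]
        refine Finset.sum_congr rfl fun j _ => ?_
        exact Finset.sum_congr rfl fun i _ => by ring
      have p2 : ∑ i ∈ I, Lagrange.nodalWeight I α i * (η * a (k - 1) * α i ^ k)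
          = η * a (k - 1) * ∑ i ∈ I, Lagrange.nodalWeight I α i * α i ^ k := by
        rw [Finset.mul_sum]
        exact Finset.sum_congr rfl fun i _ => by ring
      rw [p1, p2, S2, Finset.sum_congr rfl fun j hj => by rw [S1 j hj]]
      simp only [mul_ite, mul_one, mul_zero]
      rw [Finset.sum_ite_eq, if_pos (Finset.mem_range.mpr (by omega))]
      field_simp
      ring
    calc ∑ i, w i * (v i * (tpoly k η a).eval (α i))
        = ∑ i ∈ I, w i * (v i * (tpoly k η a).eval (α i)) := by
          refine (Finset.sum_subset (Finset.subset_univ I) fun i _ hi => ?_).symm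
          rw [hw]
          simp [if_neg hi]
      _ = ∑ i ∈ I, Lagrange.nodalWeight I α i * (tpoly k η a).eval (α i) := by
          refine Finset.sum_congr rfl fun i hi => ?_
          rw [hw]
          simp only [if_pos hi]
          rw [div_mul_eq_mul_div, mul_comm (v i), mul_div_assoc,
            mul_div_cancel_right₀ _ (hv i)]
      _ = 0 := main
  have hw0 : w ≠ 0 := by
    obtain ⟨i, hi⟩ := hIne
    intro h0
    have : w i = 0 := by simpa using congrFun h0 i
    rw [hw] at this
    simp only [if_pos hi] at this
    exact (div_ne_zero (Lagrange.nodalWeight_ne_zero hinj hi) (hv i)) this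
  have hsub : (Finset.univ.filter fun i => w i ≠ 0) ⊆ I := by
    intro i hi
    by_contra h
    exact (Finset.mem_filter.mp hi).2 (by rw [hw]; simp [if_neg h])
  have hle : hwt w ≤ k := by
    rw [hwt_eq_card]
    exact le_trans (Finset.card_le_card hsub) (le_of_eq hI)
  have hge := dual_lower hk α v hα hv η w hdual hw0
  exact ⟨w, hdual, hw0, le_antisymm hle hge⟩

end TGRSAux

/-- a TGRS code is NMDS (the code has minimum distance `n - k` and its
dual has minimum distance `k`) iff `-η⁻¹ ∈ S_k = { Σ_{i ∈ I} α_i : |I| = k }`. -/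
theorem tgrs_nmds_iff (F : Type*) [Field F] [Fintype F] (n k : ℕ)
    (hk : 2 ≤ k) (hkn : k ≤ n - k)
    (α v : Fin n → F) (hα : Function.Injective α) (hv : ∀ i, v i ≠ 0)
    (η : F) (hη : η ≠ 0) :
    (IsMinDist (TGRSCode F n k α v η) (n - k) ∧
      IsMinDist (dualCode (TGRSCode F n k α v η)) k) ↔
      -η⁻¹ ∈ {s : F | ∃ I : Finset (Fin n), I.card = k ∧ ∑ i ∈ I, α i = s} := by
  have hn : 2 * k ≤ n := by omega
  constructor
  · rintro ⟨⟨⟨c, hc, hc0, hwc⟩, -⟩, -⟩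
    exact TGRSAux.cond_of_codeword hk hn α v hα hv η hη c hc hc0 hwc
  · rintro ⟨I, hI, hs⟩
    obtain ⟨c, hc, hc0, hwc⟩ := TGRSAux.codeword_of_cond hk hn α v hα hv η hη I hI hs
    obtain ⟨x, hx, hx0, hwx⟩ := TGRSAux.dualword_of_cond hk hn α v hα hv η hη I hI hs
    exact ⟨⟨⟨c, hc, hc0, hwc⟩,
        fun c' hc' h0 => TGRSAux.code_lower (by omega) α v hα hv η c' hc' h0⟩,
      ⟨⟨x, hx, hx0, hwx⟩,
        fun x' hx' h0 => TGRSAux.dual_lower hk α v hα hv η x' hx' h0⟩⟩
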